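/- arXiv:2303.08712 — 4 statements merged into one kernel-verified Lean document; each statement's English description precedes it below -/
import Mathlib

section
/- Let m ≥ 2, and let G be a directed graph of order n = 2^m − 1 without isolated vertices that is realizable in (Z_2)^m via a labeling ψ. Then the image of the induced vertex map φ_ψ is exactly (Z_2)^m \ {0}; equivalently, the single element of (Z_2)^m not attained by φ_ψ is the identity element 0. -/
open Finset

/-- Weak reachability in a digraph: the reflexive-transitive closure of the
symmetrized adjacency relation. The weakly connected component of `x` is
`{y | WReach Adj x y}`. -/
def WReach {V : Type*} (Adj : V → V → Prop) : V → V → Prop :=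
  Relation.ReflTransGen (fun a b => Adj a b ∨ Adj b a)

/-- The induced vertex map `φ_ψ` of an arc labeling `ψ`:
`φ_ψ(x) = Σ_{y ∈ N⁺(x)} ψ(x,y) − Σ_{y ∈ N⁻(x)} ψ(y,x)`. -/
def vertexSum {V Γ : Type*} [Fintype V] [AddCommGroup Γ]
    (Adj : V → V → Prop) [DecidableRel Adj] (ψ : V → V → Γ) (x : V) : Γ :=
  (∑ y ∈ univ.filter (fun y => Adj x y), ψ x y)
    - (∑ y ∈ univ.filter (fun y => Adj y x), ψ y x)

/-- `G` is realizable in `Γ`: there is a `Γ`-irregular arc labeling, i.e. one whose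
induced vertex map is injective. -/
def Realizable {V : Type*} [Fintype V] (Adj : V → V → Prop) [DecidableRel Adj]
    (Γ : Type*) [AddCommGroup Γ] : Prop :=
  ∃ ψ : V → V → Γ, Function.Injective (vertexSum Adj ψ)

/-- If `m ≥ 2` and a digraph of order `2^m - 1` without isolated vertices is realized in
`(ℤ₂)^m` by a labeling `ψ`, then the image of the induced vertex map `φ_ψ` is exactly
`(ℤ₂)^m \ {0}`. -/
theorem stmt_2 {V : Type*} [Fintype V] (Adj : V → V → Prop) [DecidableRel Adj]
    (m : ℕ) (hm : 2 ≤ m)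
    (hiso : ∀ x : V, ∃ y : V, Adj x y ∨ Adj y x)
    (hn : Fintype.card V = 2 ^ m - 1)
    (ψ : V → V → (Fin m → ZMod 2))
    (hψ : Function.Injective (vertexSum Adj ψ)) :
    Set.range (vertexSum Adj ψ) = {g : Fin m → ZMod 2 | g ≠ 0} := by
  classical
  set f := vertexSum Adj ψ with hf
  -- The sum of the induced vertex map over all vertices is 0.
  have hsum : ∑ x, f x = 0 := by
    rw [hf]
    unfold vertexSum
    rw [Finset.sum_sub_distrib, sub_eq_zero]
    simp only [Finset.sum_filter]
    exact Finset.sum_comm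
  -- The sum of all elements of (ℤ₂)^m is 0 (since m ≥ 2).
  have hG : ∑ g : (Fin m → ZMod 2), g = 0 := by
    funext i
    rw [Finset.sum_apply]
    rw [← Equiv.sum_comp (Equiv.funSplitAt i (ZMod 2)).symm (fun g => g i)]
    have heval : ∀ p : ZMod 2 × ({ j // j ≠ i } → ZMod 2),
        (Equiv.funSplitAt i (ZMod 2)).symm p i = p.1 := by
      intro p
      rw [Equiv.funSplitAt_symm_apply, dif_pos rfl]
    simp only [heval]
    rw [Fintype.sum_prod_type]
    simp only [Finset.sum_const, Finset.card_univ]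
    rw [← Finset.smul_sum]
    have h1 : (∑ a : ZMod 2, a) = 1 := by decide
    have hcard : Fintype.card ({ j // j ≠ i } → ZMod 2) = 2 ^ (m - 1) := by
      rw [Fintype.card_fun, ZMod.card, Fintype.card_subtype_compl,
        Fintype.card_subtype_eq, Fintype.card_fin]
    rw [h1, nsmul_eq_mul, mul_one, hcard, Pi.zero_apply, Nat.cast_pow]
    have h2 : ((2 : ℕ) : ZMod 2) = 0 := by decide
    rw [h2, zero_pow (by omega)]
  -- Counting: the image of `f` misses exactly one element.
  set T := Finset.univ.image f with hT
  have hGcard : Fintype.card (Fin m → ZMod 2) = 2 ^ m := by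
    rw [Fintype.card_fun, ZMod.card, Fintype.card_fin]
  have hTcard : T.card = 2 ^ m - 1 := by
    rw [hT, Finset.card_image_of_injective _ hψ, Finset.card_univ, hn]
  have hmiss : (Finset.univ \ T).card = 1 := by
    rw [Finset.card_sdiff_of_subset (Finset.subset_univ T), Finset.card_univ, hGcard, hTcard]
    have h1 : 1 ≤ 2 ^ m := Nat.one_le_two_pow
    omega
  obtain ⟨g0, hg0⟩ := Finset.card_eq_one.mp hmiss
  -- The sum over the image is 0, so the missing element is 0.
  have hTsum : ∑ g ∈ T, g = 0 := by
    rw [hT, Finset.sum_image (fun x _ y _ h => hψ h)]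
    exact hsum
  have hsplit : ∑ g ∈ Finset.univ \ T, g + ∑ g ∈ T, g = ∑ g : (Fin m → ZMod 2), g :=
    Finset.sum_sdiff (Finset.subset_univ T)
  rw [hg0, Finset.sum_singleton, hTsum, add_zero, hG] at hsplit
  -- Hence T = univ \ {0}.
  have hTeq : T = Finset.univ \ ({0} : Finset (Fin m → ZMod 2)) := by
    rw [← hsplit, ← hg0, Finset.sdiff_sdiff_self_left]
    exact (Finset.inter_eq_right.mpr (Finset.subset_univ T)).symm
  have hrange : Set.range f = ↑T := by
    rw [hT, Finset.coe_image, Finset.coe_univ, Set.image_univ]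
  rw [hrange, hTeq]
  ext g
  simp
end

section
/- Any directed graph G of order n in which every weakly connected component has order at least 3 has a Γ-irregular labeling for every finite abelian group Γ such that |Γ| ≥ 2n + 2√(n − 1/2) − 1. -/
open Finset

section Aux
variable {Γ : Type*} [AddCommGroup Γ] [Fintype Γ] [DecidableEq Γ]

/-- If Γ has a nonzero 2-torsion element, the image of doubling has size ≤ |Γ|/2. -/
lemma double_image_small (ι : Γ) (hι : ι ≠ 0) (h2 : ι + ι = 0) :
    2 * (univ.image (fun x : Γ => x + x)).card ≤ Fintype.card Γ := by
  classical
  set R := univ.image (fun x : Γ => x + x) with hR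
  have hfib : (univ : Finset Γ).card = ∑ ρ ∈ R, (univ.filter (fun x : Γ => x + x = ρ)).card :=
    Finset.card_eq_sum_card_fiberwise (fun x _ => mem_image_of_mem _ (mem_univ x))
  have hge : ∀ ρ ∈ R, 2 ≤ (univ.filter (fun x : Γ => x + x = ρ)).card := by
    intro ρ hρ
    obtain ⟨x0, -, hx0⟩ := mem_image.1 hρ
    have hsub : ({x0, x0 + ι} : Finset Γ) ⊆ univ.filter (fun x : Γ => x + x = ρ) := by
      intro z hz
      simp only [mem_insert, mem_singleton] at hz
      rcases hz with rfl | rfl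
      · simp [hx0]
      · simp only [mem_filter, mem_univ, true_and]
        rw [add_add_add_comm, h2, add_zero, hx0]
    have hcard2 : ({x0, x0 + ι} : Finset Γ).card = 2 := by
      rw [card_insert_of_notMem, card_singleton]
      simp [hι, eq_comm, left_eq_add]
    calc 2 = ({x0, x0 + ι} : Finset Γ).card := hcard2.symm
    _ ≤ _ := card_le_card hsub
  calc 2 * R.card = ∑ _ρ ∈ R, 2 := by rw [sum_const, smul_eq_mul, mul_comm]
  _ ≤ ∑ ρ ∈ R, (univ.filter (fun x : Γ => x + x = ρ)).card := sum_le_sum hge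
  _ = (univ : Finset Γ).card := hfib.symm
  _ = Fintype.card Γ := rfl

lemma exists_not_mem (B : Finset Γ) (h : B.card < Fintype.card Γ) : ∃ x : Γ, x ∉ B := by
  by_contra hc
  push_neg at hc
  have : (univ : Finset Γ) ⊆ B := fun x _ => hc x
  have := card_le_card this
  simp only [card_univ] at this
  omega

lemma pair_step (W : Finset Γ) (σ : Γ)
    (ht : (univ.filter (fun x : Γ => x + x = σ)).card + 2 * W.card < Fintype.card Γ) :
    ∃ b c : Γ, b ≠ c ∧ b ∉ W ∧ c ∉ W ∧ b + c = σ := by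
  classical
  set B := (W ∪ W.image (fun w => σ - w)) ∪ univ.filter (fun x : Γ => x + x = σ) with hB
  have hBcard : B.card < Fintype.card Γ := by
    calc B.card ≤ (W ∪ W.image (fun w => σ - w)).card
        + (univ.filter (fun x : Γ => x + x = σ)).card := card_union_le _ _
    _ ≤ (W.card + (W.image (fun w => σ - w)).card)
        + (univ.filter (fun x : Γ => x + x = σ)).card := by
        exact Nat.add_le_add_right (card_union_le _ _) _
    _ ≤ (W.card + W.card) + (univ.filter (fun x : Γ => x + x = σ)).card := by
        exact Nat.add_le_add_right (Nat.add_le_add_left (card_image_le) _) _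
    _ < Fintype.card Γ := by omega
  obtain ⟨b, hb⟩ := exists_not_mem B hBcard
  have hbW : b ∉ W := fun h => hb (by simp [hB, h])
  have hbi : b ∉ W.image (fun w => σ - w) := fun h => hb (by simp [hB, h])
  have hbd : ¬ (b + b = σ) := fun h => hb (by simp [hB, h])
  refine ⟨b, σ - b, ?_, hbW, ?_, by abel⟩
  · intro h
    apply hbd
    rw [eq_sub_iff_add_eq] at h
    exact h
  · intro h
    exact hbi (mem_image.2 ⟨σ - b, h, by abel⟩)

lemma exists_zero_sum_set (U : Finset Γ) (s : ℕ) (hs : 3 ≤ s)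
    (hm : 2 * (U.card + s) ≤ Fintype.card Γ) :
    ∃ A : Finset Γ, A.card = s ∧ Disjoint A U ∧ ∑ a ∈ A, a = 0 := by
  classical
  set m := Fintype.card Γ with hmdef
  -- pick F ⊆ Uᶜ with |F| = s - 3
  have hUc : s - 3 ≤ Uᶜ.card := by
    rw [card_compl]
    have hum : U.card ≤ m := by
      rw [hmdef, ← card_univ]; exact card_le_card (subset_univ U)
    omega
  obtain ⟨F, hFsub, hFcard⟩ := Finset.exists_subset_card_eq hUc
  have hFU : ∀ x ∈ F, x ∉ U := fun x hx => (mem_compl.1 (hFsub hx))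
  set T : Γ := ∑ a ∈ F, a with hT
  -- choose a1
  have key : ∃ a1 : Γ, a1 ∉ U ∧ a1 ∉ F ∧
      (univ.filter (fun x : Γ => x + x = -(T + a1))).card + 2 * (U.card + (s - 3) + 1) < m := by
    by_cases h2 : ∃ ι : Γ, ι ≠ 0 ∧ ι + ι = 0
    · obtain ⟨ι, hι, hι2⟩ := h2
      set R := univ.image (fun x : Γ => x + x) with hR
      have hRcard : 2 * R.card ≤ m := double_image_small ι hι hι2
      set Bad := (U ∪ F) ∪ R.image (fun ρ => -T - ρ) with hBad
      have hBadcard : Bad.card < m := by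
        have h1 : Bad.card ≤ U.card + F.card + R.card :=
          (card_union_le _ _).trans (by
            exact Nat.add_le_add (card_union_le _ _) card_image_le)
        omega
      obtain ⟨a1, ha1⟩ := exists_not_mem Bad hBadcard
      have ha1U : a1 ∉ U := fun h => ha1 (by simp [hBad, h])
      have ha1F : a1 ∉ F := fun h => ha1 (by simp [hBad, h])
      refine ⟨a1, ha1U, ha1F, ?_⟩
      have hempty : (univ.filter (fun x : Γ => x + x = -(T + a1))) = ∅ := by
        rw [filter_eq_empty_iff]
        intro x _ hx
        apply ha1
        rw [hBad]
        apply mem_union_right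
        apply mem_image.2
        refine ⟨x + x, mem_image_of_mem _ (mem_univ x), ?_⟩
        rw [hx]; abel
      rw [hempty]
      simp only [card_empty, zero_add]
      omega
    · push_neg at h2
      have hinj : ∀ y : Γ, (univ.filter (fun x : Γ => x + x = y)).card ≤ 1 := by
        intro y
        apply card_le_one.2
        intro a ha b hb
        simp only [mem_filter] at ha hb
        by_contra hne
        have hz : (a - b) + (a - b) = 0 := by
          have := ha.2.trans hb.2.symm
          rw [← sub_eq_zero] at this
          rw [← this]; abel
        exact h2 (a - b) (sub_ne_zero.2 hne) hz
      have hcard : (U ∪ F).card < m := by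
        have h1 : (U ∪ F).card ≤ U.card + F.card := card_union_le _ _
        omega
      obtain ⟨a1, ha1⟩ := exists_not_mem _ hcard
      refine ⟨a1, fun h => ha1 (mem_union_left _ h), fun h => ha1 (mem_union_right _ h), ?_⟩
      have := hinj (-(T + a1))
      omega
  obtain ⟨a1, ha1U, ha1F, hgood⟩ := key
  -- the pair
  set W := (U ∪ F) ∪ {a1} with hW
  have hWcard : W.card ≤ U.card + (s - 3) + 1 := by
    calc W.card ≤ (U ∪ F).card + ({a1} : Finset Γ).card := card_union_le _ _
    _ ≤ U.card + F.card + 1 := by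
        exact Nat.add_le_add (card_union_le _ _) (card_singleton _).le
    _ = U.card + (s - 3) + 1 := by rw [hFcard]
  obtain ⟨b, c, hbc, hbW, hcW, hsum⟩ := pair_step W (-(T + a1)) (by
    have := hgood; omega)
  -- assemble
  have hbU : b ∉ U := fun h => hbW (by simp [hW, h])
  have hcU : c ∉ U := fun h => hcW (by simp [hW, h])
  have hbF : b ∉ F := fun h => hbW (by simp [hW, h])
  have hcF : c ∉ F := fun h => hcW (by simp [hW, h])
  have hba : b ≠ a1 := fun h => hbW (by simp [hW, h])
  have hca : c ≠ a1 := fun h => hcW (by simp [hW, h])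
  have ha1nbc : a1 ∉ insert b (insert c F) := by
    simp only [mem_insert]
    push_neg
    exact ⟨fun h => hba h.symm, fun h => hca h.symm, ha1F⟩
  have hbnc : b ∉ insert c F := by
    simp only [mem_insert]; push_neg; exact ⟨hbc, hbF⟩
  refine ⟨insert a1 (insert b (insert c F)), ?_, ?_, ?_⟩
  · rw [card_insert_of_notMem ha1nbc, card_insert_of_notMem hbnc,
      card_insert_of_notMem hcF, hFcard]
    omega
  · rw [disjoint_left]
    intro x hx
    simp only [mem_insert] at hx
    rcases hx with rfl | rfl | rfl | hx
    · exact ha1U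
    · exact hbU
    · exact hcU
    · exact hFU x hx
  · rw [sum_insert ha1nbc, sum_insert hbnc, sum_insert hcF, ← hT]
    have : b + (c + T) = b + c + T := by abel
    rw [this, hsum]
    abel

lemma exists_zero_sum_family {ι : Type*} [DecidableEq ι] (sz : ι → ℕ) (S : Finset ι)
    (U : Finset Γ) (hs : ∀ i ∈ S, 3 ≤ sz i)
    (hm : 2 * (U.card + ∑ i ∈ S, sz i) ≤ Fintype.card Γ) :
    ∃ A : ι → Finset Γ,
      (∀ i ∈ S, (A i).card = sz i ∧ Disjoint (A i) U ∧ ∑ a ∈ A i, a = 0) ∧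
      (∀ i ∈ S, ∀ j ∈ S, i ≠ j → Disjoint (A i) (A j)) := by
  classical
  induction S using Finset.induction generalizing U with
  | empty => exact ⟨fun _ => ∅, fun i hi => absurd hi (notMem_empty i), fun i hi => absurd hi (notMem_empty i)⟩
  | @insert i S hiS ih =>
    have hsum : ∑ j ∈ insert i S, sz j = sz i + ∑ j ∈ S, sz j := sum_insert hiS
    obtain ⟨Ai, hAicard, hAidisj, hAisum⟩ := exists_zero_sum_set U (sz i)
      (hs i (mem_insert_self i S)) (by rw [hsum] at hm; omega)
    obtain ⟨A, hA1, hA2⟩ := ih (U ∪ Ai) (fun j hj => hs j (mem_insert_of_mem hj)) (by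
      have : (U ∪ Ai).card ≤ U.card + sz i := by
        calc (U ∪ Ai).card ≤ U.card + Ai.card := card_union_le _ _
        _ = U.card + sz i := by rw [hAicard]
      rw [hsum] at hm
      omega)
    refine ⟨fun j => if j = i then Ai else A j, ?_, ?_⟩
    · intro j hj
      by_cases hji : j = i
      · simp only [if_pos hji]
        rw [hji]
        exact ⟨hAicard, hAidisj, hAisum⟩
      · have hjS : j ∈ S := (mem_insert.1 hj).resolve_left hji
        simp only [if_neg hji]
        obtain ⟨h1, h2, h3⟩ := hA1 j hjS
        exact ⟨h1, h2.mono_right subset_union_left, h3⟩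
    · intro j hj k hk hjk
      by_cases hji : j = i
      · have hkS : k ∈ S := (mem_insert.1 hk).resolve_left (fun h => hjk (hji.trans h.symm))
        have hki : k ≠ i := fun h => hiS (h ▸ hkS)
        simp only [if_pos hji, if_neg hki]
        exact ((hA1 k hkS).2.1.mono_right subset_union_right).symm
      · have hjS : j ∈ S := (mem_insert.1 hj).resolve_left hji
        by_cases hki : k = i
        · simp only [if_pos hki, if_neg hji]
          exact (hA1 j hjS).2.1.mono_right subset_union_right
        · have hkS : k ∈ S := (mem_insert.1 hk).resolve_left hki
          simp only [if_neg hji, if_neg hki]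
          exact hA2 j hjS k hkS hjk

end Aux

section AuxGraph
variable {V Γ : Type*} [Fintype V] [DecidableEq V] [AddCommGroup Γ]
  (Adj : V → V → Prop) [DecidableRel Adj]

lemma vertexSum_add (ψ₁ ψ₂ : V → V → Γ) :
    vertexSum Adj (ψ₁ + ψ₂) = vertexSum Adj ψ₁ + vertexSum Adj ψ₂ := by
  funext v
  simp only [vertexSum, Pi.add_apply, sum_add_distrib]
  abel

lemma vertexSum_zero : vertexSum Adj (0 : V → V → Γ) = 0 := by
  funext v
  simp [vertexSum]

lemma vertexSum_arc (x y : V) (h : Adj x y) (g : Γ) :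
    vertexSum Adj (fun a b => if a = x ∧ b = y then g else 0)
      = Pi.single x g - Pi.single y g := by
  funext v
  simp only [vertexSum, Pi.sub_apply, Pi.single_apply]
  have hout : (∑ w ∈ univ.filter (fun w => Adj v w),
      (if v = x ∧ w = y then g else 0)) = if v = x then g else 0 := by
    by_cases hv : v = x
    · subst hv
      simp only [true_and, if_pos rfl]
      rw [Finset.sum_ite_eq' (univ.filter (fun w => Adj v w)) y (fun _ => g)]
      simp [h]
    · simp [hv]
  have hin : (∑ w ∈ univ.filter (fun w => Adj w v),
      (if w = x ∧ v = y then g else 0)) = if v = y then g else 0 := by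
    by_cases hv : v = y
    · subst hv
      simp only [and_true, if_pos rfl]
      rw [Finset.sum_ite_eq' (univ.filter (fun w => Adj w v)) x (fun _ => g)]
      simp [h]
    · simp [hv]
  rw [hout, hin]

/-- closure of realizable vertex maps under WReach differences -/
lemma wreach_diff_realizable (x y : V) (h : WReach Adj x y) (g : Γ) :
    ∃ ψ : V → V → Γ, vertexSum Adj ψ = Pi.single x g - Pi.single y g := by
  induction h with
  | refl => exact ⟨0, by rw [vertexSum_zero]; simp⟩
  | @tail b c hab hbc ih =>
    obtain ⟨ψ₁, hψ₁⟩ := ih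
    have step : ∃ ψ : V → V → Γ, vertexSum Adj ψ = Pi.single b g - Pi.single c g := by
      rcases hbc with hbc | hcb
      · exact ⟨_, vertexSum_arc Adj b c hbc g⟩
      · refine ⟨_, (vertexSum_arc Adj c b hcb (-g)).trans ?_⟩
        funext v
        simp only [Pi.sub_apply, Pi.single_apply]
        by_cases h1 : v = c <;> by_cases h2 : v = b <;> simp [h1, h2] <;> split_ifs <;> abel
    obtain ⟨ψ₂, hψ₂⟩ := step
    refine ⟨ψ₁ + ψ₂, ?_⟩
    rw [vertexSum_add, hψ₁, hψ₂]
    abel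

lemma realize_of_zero_sum (r : V → V) (hrx : ∀ x, WReach Adj x (r x)) (φ : V → Γ)
    (hz : ∀ x, ∑ y ∈ univ.filter (fun y => r y = r x), φ y = 0) :
    ∃ ψ : V → V → Γ, vertexSum Adj ψ = φ := by
  classical
  have hsum : ∑ x : V, (Pi.single x (φ x) - Pi.single (r x) (φ x)) = φ := by
    rw [sum_sub_distrib, Finset.univ_sum_single]
    have h0 : ∑ x : V, Pi.single (r x) (φ x) = (0 : V → Γ) := by
      funext v
      rw [Finset.sum_apply]
      have heq : ∀ x ∈ (univ : Finset V),
          (Pi.single (r x) (φ x) : V → Γ) v = if v = r x then φ x else 0 := by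
        intro x _
        rw [Pi.single_apply]
      rw [Finset.sum_congr rfl heq, ← Finset.sum_filter]
      by_cases hex : ∃ x0, r x0 = v
      · obtain ⟨x0, hx0⟩ := hex
        have hfe : univ.filter (fun x : V => v = r x) = univ.filter (fun y => r y = r x0) := by
          apply filter_congr
          intro y _
          rw [← hx0]
          simp [eq_comm]
        rw [hfe]
        simpa using hz x0
      · push_neg at hex
        have : univ.filter (fun x : V => v = r x) = ∅ := by
          rw [filter_eq_empty_iff]
          exact fun x _ h => hex x h.symm
        rw [this, sum_empty]
        simp
    rw [h0, sub_zero]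
  set vmap : (V → V → Γ) →+ (V → Γ) := AddMonoidHom.mk' (vertexSum Adj) (vertexSum_add Adj)
    with hvmap
  have : ∀ x : V, ∃ ψ, vertexSum Adj ψ = (Pi.single x (φ x) : V → Γ) - (Pi.single (r x) (φ x) : V → Γ) :=
    fun x => wreach_diff_realizable Adj x (r x) (hrx x) (φ x)
  choose Ψ hΨ using this
  refine ⟨∑ x : V, Ψ x, ?_⟩
  have : vertexSum Adj (∑ x : V, Ψ x) = vmap (∑ x : V, Ψ x) := rfl
  rw [this, map_sum, ← hsum]
  exact Finset.sum_congr rfl (fun x _ => hΨ x)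

end AuxGraph

/-- Theorem (Cichacz–Tuza): any digraph of order `n` with all weakly connected components of
order at least 3 has a `Γ`-irregular labeling whenever `|Γ| ≥ 2n + 2·√(n - 1/2) - 1`. -/
theorem stmt_4 {V Γ : Type*} [Fintype V] [AddCommGroup Γ] [Fintype Γ]
    (Adj : V → V → Prop) [DecidableRel Adj]
    (hcomp : ∀ x : V, 3 ≤ {y | WReach Adj x y}.ncard)
    (hΓ : 2 * (Fintype.card V : ℝ) + 2 * Real.sqrt ((Fintype.card V : ℝ) - 1 / 2) - 1
      ≤ (Fintype.card Γ : ℝ)) :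
    ∃ ψ : V → V → Γ, Function.Injective (vertexSum Adj ψ) := by

  classical
  rcases isEmpty_or_nonempty V with hV | hV
  · exact ⟨0, fun a => (hV.false a).elim⟩
  -- basic facts
  obtain ⟨x⟩ := hV
  have hn3 : 3 ≤ Fintype.card V := by
    refine le_trans (hcomp x) ?_
    have h1 : {y | WReach Adj x y}.ncard ≤ (Set.univ : Set V).ncard :=
      Set.ncard_le_ncard (Set.subset_univ _) Set.finite_univ
    rwa [Set.ncard_univ, Nat.card_eq_fintype_card] at h1
  have hm2 : 2 * Fintype.card V ≤ Fintype.card Γ := by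
    have hs1 : (1 : ℝ) ≤ Real.sqrt ((Fintype.card V : ℝ) - 1 / 2) := by
      have h3r : (3 : ℝ) ≤ (Fintype.card V : ℝ) := by exact_mod_cast hn3
      have := Real.sqrt_le_sqrt (show (1 : ℝ) ≤ (Fintype.card V : ℝ) - 1 / 2 by linarith)
      rwa [Real.sqrt_one] at this
    have : (2 * Fintype.card V : ℝ) ≤ (Fintype.card Γ : ℝ) := by
      push_cast
      nlinarith
    exact_mod_cast this
  -- the weak-component setoid
  have hsymm : ∀ a b : V, WReach Adj a b → WReach Adj b a := by
    intro a b h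
    exact (@Relation.ReflTransGen.stdSymm _ _ ⟨fun u v huv => huv.symm⟩).symm _ _ h
  letI sd : Setoid V := ⟨WReach Adj, ⟨fun _ => Relation.ReflTransGen.refl,
    fun {a b} h => hsymm a b h, fun {a b c} h1 h2 => Relation.ReflTransGen.trans h1 h2⟩⟩
  haveI : DecidableEq (Quotient sd) := Classical.decEq _
  let mk : V → Quotient sd := Quotient.mk sd
  have hmk : ∀ a b : V, mk a = mk b ↔ WReach Adj a b :=
    fun a b => ⟨fun h => Quotient.exact h, fun h => Quotient.sound h⟩
  let C : Quotient sd → Finset V := fun q => univ.filter (fun y => mk y = q)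
  let sz : Quotient sd → ℕ := fun q => (C q).card
  have hCx : ∀ a : V, a ∈ C (mk a) := fun a => mem_filter.2 ⟨mem_univ a, rfl⟩
  -- component sizes
  have h3 : ∀ q : Quotient sd, 3 ≤ sz q := by
    intro q
    induction q using Quotient.ind with
    | _ x0 =>
      have hset : {y | WReach Adj x0 y} = ↑(C (mk x0)) := by
        ext y
        simp only [Set.mem_setOf_eq, coe_filter, mem_univ, true_and, Set.mem_setOf_eq, C]
        rw [hmk]
        exact ⟨fun h => hsymm _ _ h, fun h => hsymm _ _ h⟩
      have := hcomp x0
      rwa [hset, Set.ncard_coe_finset] at this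
  have hsum : ∑ q : Quotient sd, sz q = Fintype.card V := by
    rw [← card_univ]
    exact (card_eq_sum_card_fiberwise (fun y _ => mem_univ (mk y))).symm
  -- the zero-sum family
  obtain ⟨A, hA1, hA2⟩ := exists_zero_sum_family sz univ (∅ : Finset Γ)
    (fun q _ => h3 q) (by rw [card_empty, zero_add, hsum]; exact hm2)
  -- the injective vertex map
  have hcards : ∀ q : Quotient sd, (C q).card = (A q).card :=
    fun q => ((hA1 q (mem_univ q)).1).symm
  let E : ∀ q : Quotient sd, (C q : Finset V) ≃ (A q : Finset Γ) :=
    fun q => Finset.equivOfCardEq (hcards q)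
  let φ : V → Γ := fun y => (E (mk y) ⟨y, hCx y⟩ : Γ)
  have hkey : ∀ (q : Quotient sd) (y : V) (hy : y ∈ C q), φ y = (E q ⟨y, hy⟩ : Γ) := by
    intro q y hy
    have hq : mk y = q := (mem_filter.1 hy).2
    subst hq
    rfl
  have hφmem : ∀ y : V, φ y ∈ A (mk y) := fun y => (E (mk y) ⟨y, hCx y⟩).2
  have hφinj : Function.Injective φ := by
    intro a b hab
    by_cases hq : mk a = mk b
    · have hb : b ∈ C (mk a) := mem_filter.2 ⟨mem_univ b, hq.symm⟩
      have h1 : φ a = (E (mk a) ⟨a, hCx a⟩ : Γ) := hkey (mk a) a (hCx a)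
      have h2 : φ b = (E (mk a) ⟨b, hb⟩ : Γ) := hkey (mk a) b hb
      have hcoe : ((E (mk a)) ⟨a, hCx a⟩ : Γ) = ((E (mk a)) ⟨b, hb⟩ : Γ) := by
        rw [← h1, ← h2]; exact hab
      have := (E (mk a)).injective (Subtype.ext hcoe)
      exact congrArg Subtype.val this
    · exfalso
      have hd := hA2 (mk a) (mem_univ _) (mk b) (mem_univ _) hq
      exact (Finset.disjoint_left.1 hd) (hφmem a) (hab ▸ hφmem b)
  -- zero sums on components
  let r : V → V := fun y => (mk y).out
  have hrmk : ∀ a b : V, r a = r b ↔ mk a = mk b := by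
    intro a b
    constructor
    · intro h
      have h1 : mk (r a) = mk a := Quotient.out_eq _
      have h2 : mk (r b) = mk b := Quotient.out_eq _
      rw [← h1, ← h2, h]
    · intro h
      simp only [r, h]
  have hrx : ∀ y : V, WReach Adj y (r y) := by
    intro y
    have : mk (r y) = mk y := Quotient.out_eq _
    exact hsymm _ _ ((hmk _ _).1 this)
  have hz : ∀ y : V, ∑ z ∈ univ.filter (fun z => r z = r y), φ z = 0 := by
    intro y
    have hfe : univ.filter (fun z => r z = r y) = C (mk y) := by
      apply filter_congr
      intro z _
      rw [hrmk]
    rw [hfe]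
    have hbij : ∑ z ∈ C (mk y), φ z = ∑ a ∈ A (mk y), a := by
      apply Finset.sum_bij (fun z hz => (E (mk y) ⟨z, hz⟩ : Γ))
      · intro z hz
        exact (E (mk y) ⟨z, hz⟩).2
      · intro z1 hz1 z2 hz2 h
        have := (E (mk y)).injective (Subtype.ext h)
        exact congrArg Subtype.val this
      · intro a ha
        refine ⟨((E (mk y)).symm ⟨a, ha⟩ : (C (mk y) : Finset V)),
          ((E (mk y)).symm ⟨a, ha⟩).2, ?_⟩
        rw [Subtype.coe_eta]
        rw [(E (mk y)).apply_symm_apply]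
      · intro z hz
        exact hkey (mk y) z hz
    rw [hbij]
    exact (hA1 (mk y) (mem_univ _)).2.2
  -- realize and conclude
  obtain ⟨ψ, hψ⟩ := realize_of_zero_sum Adj r hrx φ hz
  exact ⟨ψ, hψ ▸ hφinj⟩
end

section
/- Any directed graph G of order n in which every weakly connected component has order at least 4 has a Γ-irregular labeling for every finite abelian group Γ such that |Γ| ≥ 2n + 1. -/
open Finset

set_option linter.unusedSectionVars false

section comb
variable {Γ : Type*} [AddCommGroup Γ] [Fintype Γ] [DecidableEq Γ]

/-- Final pair: find x ≠ y outside B with x + y = c. -/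
lemma pair_lemma (B : Finset Γ) (c : Γ)
    (h : 2 * B.card + (univ.filter (fun x : Γ => x + x = c)).card < Fintype.card Γ) :
    ∃ x y : Γ, x ≠ y ∧ x ∉ B ∧ y ∉ B ∧ x + y = c := by
  set K := univ.filter (fun x : Γ => x + x = c) with hK
  set bad := (B ∪ B.image (fun b => c - b)) ∪ K with hbad
  have hcard : bad.card < Fintype.card Γ := by
    calc bad.card ≤ (B ∪ B.image (fun b => c - b)).card + K.card := card_union_le _ _
    _ ≤ (B.card + (B.image (fun b => c - b)).card) + K.card :=
        add_le_add_left (card_union_le _ _) _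
    _ ≤ (B.card + B.card) + K.card := by
        exact add_le_add_left (add_le_add_right (card_image_le) _) _
    _ < Fintype.card Γ := by omega
  have : (badᶜ).Nonempty := by
    rw [← card_pos, card_compl]; omega
  obtain ⟨x, hx⟩ := this
  rw [mem_compl] at hx
  simp only [hbad, mem_union, not_or] at hx
  obtain ⟨⟨hxB, hxim⟩, hxK⟩ := hx
  refine ⟨x, c - x, ?_, hxB, ?_, by abel⟩
  · intro hxy
    exact hxK (by simp [hK, eq_sub_iff_add_eq.mp hxy])
  · intro hmem
    exact hxim (mem_image.mpr ⟨c - x, hmem, by abel⟩)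

lemma Kc_le (c : Γ) :
    (univ.filter (fun x : Γ => x + x = c)).card ≤ (univ.filter (fun x : Γ => x + x = 0)).card := by
  rcases (univ.filter (fun x : Γ => x + x = c)).eq_empty_or_nonempty with he | ⟨x0, hx0⟩
  · simp [he]
  · rw [mem_filter] at hx0
    apply Finset.card_le_card_of_injOn (fun x => x - x0)
    · intro x hx
      rw [mem_coe, mem_filter] at hx ⊢
      refine ⟨mem_univ _, ?_⟩
      have : (x - x0) + (x - x0) = (x + x) - (x0 + x0) := by abel
      rw [this, hx.2, hx0.2, sub_self]
    · intro a _ b _ hab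
      simpa using sub_left_injective hab

lemma D_mul :
    (univ.image (fun x : Γ => x + x)).card * (univ.filter (fun x : Γ => x + x = 0)).card
      = Fintype.card Γ := by
  classical
  let f2 : Γ →+ Γ := AddMonoidHom.mk' (fun x => x + x) (by intro a b; abel)
  have h1 : Nat.card Γ = Nat.card (Γ ⧸ f2.ker) * Nat.card f2.ker :=
    AddSubgroup.card_eq_card_quotient_mul_card_addSubgroup f2.ker
  have h2 : Nat.card (Γ ⧸ f2.ker) = Nat.card f2.range :=
    Nat.card_congr (QuotientAddGroup.quotientKerEquivRange f2).toEquiv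
  have hset : (f2.range : Set Γ) = ((univ.image (fun x : Γ => x + x) : Finset Γ) : Set Γ) := by
    ext x
    simp [AddMonoidHom.mem_range, f2, eq_comm, AddMonoidHom.mk'_apply]
  have h3 : Nat.card f2.range = (univ.image (fun x : Γ => x + x)).card := by
    rw [show Nat.card f2.range = Nat.card (f2.range : Set Γ) from rfl,
      Nat.card_coe_set_eq, hset, Set.ncard_coe_finset]
  have hker : (f2.ker : Set Γ) = ((univ.filter (fun x : Γ => x + x = 0) : Finset Γ) : Set Γ) := by
    ext x
    simp [AddMonoidHom.mem_ker, f2, AddMonoidHom.mk'_apply]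
  have h4 : Nat.card f2.ker = (univ.filter (fun x : Γ => x + x = 0)).card := by
    rw [show Nat.card f2.ker = Nat.card (f2.ker : Set Γ) from rfl,
      Nat.card_coe_set_eq, hker, Set.ncard_coe_finset]
  rw [h2, h3, h4] at h1
  rw [← h1, Nat.card_eq_fintype_card]

/-- Key selection lemma: pick `m ≥ 3` fresh distinct elements with sum zero. -/
lemma selection (S : Finset Γ) (m : ℕ) (hm : 3 ≤ m)
    (h : 2 * (S.card + m) + 1 ≤ Fintype.card Γ) :
    ∃ T : Finset Γ, T.card = m ∧ Disjoint T S ∧ ∑ x ∈ T, x = 0 := by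
  set t := (univ.filter (fun x : Γ => x + x = 0)).card with ht
  by_cases htle : t ≤ 4
  · -- small 2-torsion: m - 2 free picks, then a pair
    obtain ⟨F, hFsub, hFcard⟩ : ∃ F ⊆ Sᶜ, F.card = m - 2 :=
      Finset.exists_subset_card_eq (by rw [card_compl]; omega)
    set c : Γ := -(∑ x ∈ F, x) with hc
    have hBcard : (S ∪ F).card ≤ S.card + (m - 2) := by
      refine le_trans (card_union_le _ _) (by omega)
    obtain ⟨x, y, hxy, hxB, hyB, hsum⟩ := pair_lemma (S ∪ F) c
      (by
        have := Kc_le (Γ := Γ) c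
        omega)
    have hxF : x ∉ F := fun hx => hxB (mem_union_right _ hx)
    have hyF : y ∉ F := fun hy => hyB (mem_union_right _ hy)
    refine ⟨insert x (insert y F), ?_, ?_, ?_⟩
    · rw [card_insert_of_notMem (by simp [hxy, hxF]), card_insert_of_notMem hyF]
      omega
    · rw [disjoint_left]
      intro a ha haS
      rcases mem_insert.mp ha with rfl | ha
      · exact hxB (mem_union_left _ haS)
      rcases mem_insert.mp ha with rfl | ha
      · exact hyB (mem_union_left _ haS)
      · exact absurd (hFsub ha) (by simpa using haS)
    · rw [sum_insert (by simp [hxy, hxF]), sum_insert hyF]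
      calc x + (y + ∑ x ∈ F, x) = (x + y) + ∑ x ∈ F, x := by abel
      _ = 0 := by rw [hsum, hc]; abel
  · -- large 2-torsion: avoid the doubling coset
    push_neg at htle
    set D := univ.image (fun x : Γ => x + x) with hD
    have hDt : D.card * t = Fintype.card Γ := D_mul
    have hD5 : 5 * D.card ≤ Fintype.card Γ := by
      calc 5 * D.card ≤ D.card * t := by rw [Nat.mul_comm]; exact Nat.mul_le_mul_left _ (by omega)
      _ = _ := hDt
    obtain ⟨F, hFsub, hFcard⟩ : ∃ F ⊆ Sᶜ, F.card = m - 3 :=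
      Finset.exists_subset_card_eq (by rw [card_compl]; omega)
    set s₀ : Γ := ∑ x ∈ F, x with hs₀
    set bad1 := (S ∪ F) ∪ D.image (fun d => -s₀ - d) with hbad1
    have hbad1card : bad1.card < Fintype.card Γ := by
      calc bad1.card ≤ (S ∪ F).card + (D.image (fun d => -s₀ - d)).card := card_union_le _ _
      _ ≤ (S.card + F.card) + D.card :=
          add_le_add (card_union_le _ _) card_image_le
      _ < Fintype.card Γ := by omega
    obtain ⟨z, hz⟩ : (bad1ᶜ).Nonempty := by rw [← card_pos, card_compl]; omega
    rw [mem_compl] at hz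
    simp only [hbad1, mem_union, not_or] at hz
    obtain ⟨⟨hzS, hzF⟩, hzD⟩ := hz
    set c : Γ := -s₀ - z with hc
    have hcD : c ∉ D := by
      intro hcd
      exact hzD (mem_image.mpr ⟨c, hcd, by rw [hc]; abel⟩)
    have hKc : (univ.filter (fun x : Γ => x + x = c)).card = 0 := by
      rw [card_eq_zero, filter_eq_empty_iff]
      intro a _ hac
      exact hcD (mem_image.mpr ⟨a, mem_univ _, hac⟩)
    have hBcard : (insert z (S ∪ F)).card ≤ S.card + F.card + 1 := by
      refine le_trans (card_insert_le _ _) (by have := card_union_le S F; omega)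
    obtain ⟨x, y, hxy, hxB, hyB, hsum⟩ := pair_lemma (insert z (S ∪ F)) c (by omega)
    have hxF : x ∉ F := fun hx => hxB (mem_insert_of_mem (mem_union_right _ hx))
    have hyF : y ∉ F := fun hy => hyB (mem_insert_of_mem (mem_union_right _ hy))
    have hxz : x ≠ z := fun hx => hxB (by rw [hx]; exact mem_insert_self _ _)
    have hyz : y ≠ z := fun hy => hyB (by rw [hy]; exact mem_insert_self _ _)
    refine ⟨insert x (insert y (insert z F)), ?_, ?_, ?_⟩
    · rw [card_insert_of_notMem (by simp [hxy, hxF, hxz]),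
        card_insert_of_notMem (by simp [hyF, hyz]),
        card_insert_of_notMem hzF]
      omega
    · rw [disjoint_left]
      intro a ha haS
      rcases mem_insert.mp ha with rfl | ha
      · exact hxB (mem_insert_of_mem (mem_union_left _ haS))
      rcases mem_insert.mp ha with rfl | ha
      · exact hyB (mem_insert_of_mem (mem_union_left _ haS))
      rcases mem_insert.mp ha with rfl | ha
      · exact hzS haS
      · exact absurd (hFsub ha) (by simpa using haS)
    · rw [sum_insert (by simp [hxy, hxF, hxz]), sum_insert (by simp [hyF, hyz]),
        sum_insert hzF]
      calc x + (y + (z + ∑ x ∈ F, x)) = (x + y) + (z + s₀) := by rw [hs₀]; abel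
      _ = 0 := by rw [hsum, hc]; abel

end comb

section graph
variable {V Γ : Type*} [Fintype V] [DecidableEq V] [AddCommGroup Γ]
variable (Adj : V → V → Prop) [DecidableRel Adj]

lemma wreach_symm {x y : V} (h : WReach Adj x y) : WReach Adj y x := by
  induction h with
  | refl => exact .refl
  | tail _ h2 ih => exact Relation.ReflTransGen.head h2.symm ih

/-- `vertexSum` as an additive homomorphism in the labeling. -/
def Lhom : (V → V → Γ) →+ (V → Γ) where
  toFun ψ := vertexSum Adj ψ
  map_zero' := by funext x; simp [vertexSum]
  map_add' ψ χ := by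
    funext x
    simp only [vertexSum, Pi.add_apply, Finset.sum_add_distrib]
    abel

lemma single_mem {a b : V} (hab : a ≠ b) (h : Adj a b) (g : Γ) :
    (fun v => if v = a then g else if v = b then -g else 0) ∈ (Lhom (Γ := Γ) Adj).range := by
  refine ⟨fun x y => if x = a ∧ y = b then g else 0, funext fun v => ?_⟩
  show vertexSum Adj (fun x y => if x = a ∧ y = b then g else 0) v
      = if v = a then g else if v = b then -g else 0
  rw [vertexSum]
  by_cases hva : v = a <;> by_cases hvb : v = b
  · exact absurd (hva ▸ hvb.symm) hab.symm
  · simp [hva, hvb, Finset.sum_ite_eq', h, hab, Ne.symm hab]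
  · simp [hva, hvb, Finset.sum_ite_eq', h, hab, Ne.symm hab]
  · simp [hva, hvb]

lemma pathdiff_mem {a b : V} (h : WReach Adj a b) (g : Γ) :
    (fun v => (if v = a then g else 0) - (if v = b then g else 0))
      ∈ (Lhom (Γ := Γ) Adj).range := by
  induction h with
  | refl =>
    have : (fun v : V => (if v = a then g else 0) - (if v = a then g else 0)) = 0 := by
      funext v; simp
    rw [this]
    exact AddSubgroup.zero_mem _
  | @tail b c hab hbc ih =>
    by_cases hbc' : b = c
    · subst hbc'; exact ih
    have h2 : (fun v => (if v = b then g else 0) - (if v = c then g else 0))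
        ∈ (Lhom (Γ := Γ) Adj).range := by
      rcases hbc with h | h
      · have := single_mem Adj hbc' h g
        convert this using 1
        funext v
        by_cases hvb : v = b <;> by_cases hvc : v = c <;>
          simp_all
      · have := single_mem Adj (Ne.symm hbc') h (-g)
        convert this using 1
        funext v
        by_cases hvb : v = b <;> by_cases hvc : v = c <;>
          simp_all
    have h3 := AddSubgroup.add_mem _ ih h2
    convert h3 using 1
    funext v
    simp only [Pi.add_apply]
    abel

lemma mem_range_of_classSums [DecidableRel (WReach Adj)] (t : V → Γ)
    (hsum : ∀ x : V, ∑ y ∈ univ.filter (fun y => WReach Adj x y), t y = 0) :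
    t ∈ (Lhom (Γ := Γ) Adj).range := by
  classical
  let sd : Setoid V := ⟨WReach Adj,
    ⟨fun _ => .refl, fun h => wreach_symm Adj h, fun h1 h2 => h1.trans h2⟩⟩
  let rep : V → V := fun v => (Quotient.mk sd v).out
  have hrep1 : ∀ v, WReach Adj v (rep v) := fun v =>
    wreach_symm Adj (Quotient.exact (Quotient.out_eq (Quotient.mk sd v)))
  have hrep2 : ∀ {v w}, WReach Adj v w → rep v = rep w := fun h =>
    congrArg Quotient.out (Quotient.sound h)
  have hrzero : ∀ w : V, ∑ v ∈ univ.filter (fun v => rep v = w), t v = 0 := by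
    intro w
    rcases (univ.filter (fun v => rep v = w)).eq_empty_or_nonempty with he | ⟨v₀, hv₀⟩
    · simp [he]
    · rw [mem_filter] at hv₀
      have hw : rep w = w := by
        rw [← hv₀.2]; exact (hrep2 (hrep1 v₀)).symm
      have : univ.filter (fun v => rep v = w) = univ.filter (fun v => WReach Adj w v) := by
        ext u
        simp only [mem_filter, mem_univ, true_and]
        constructor
        · intro hu
          have h1 := hrep1 u
          rw [hu] at h1
          exact wreach_symm Adj h1
        · intro hu
          exact (hrep2 hu).symm.trans hw
      rw [this]
      exact hsum w
  have key : t = ∑ v ∈ univ,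
      (fun w => (if w = v then t v else 0) - (if w = rep v then t v else 0)) := by
    funext w
    rw [Finset.sum_apply, Finset.sum_sub_distrib]
    have e1 : ∑ v ∈ univ, (if w = v then t v else 0) = t w := by
      simp [Finset.sum_ite_eq]
    have e2 : ∑ v ∈ univ, (if w = rep v then t v else 0) = 0 := by
      have : ∀ v ∈ univ, (if w = rep v then t v else 0) = (if rep v = w then t v else 0) := by
        intro v _; simp [eq_comm]
      rw [Finset.sum_congr rfl this, ← Finset.sum_filter]
      exact hrzero w
    rw [e1, e2, sub_zero]
  rw [key]
  exact AddSubgroup.sum_mem _ (fun v _ => pathdiff_mem Adj (hrep1 v) (t v))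

lemma pick [Fintype Γ] [DecidableEq Γ] [DecidableRel (WReach Adj)]
    (hΓ : 2 * Fintype.card V + 1 ≤ Fintype.card Γ)
    (hcomp : ∀ x : V, 3 ≤ (univ.filter (fun y => WReach Adj x y)).card) :
    ∀ A : Finset V, (∀ v ∈ A, ∀ w, WReach Adj v w → w ∈ A) →
      ∃ f : V → Γ, Set.InjOn f ↑A ∧
        ∀ v ∈ A, ∑ y ∈ univ.filter (fun y => WReach Adj v y), f y = 0 := by
  intro A
  induction A using Finset.strongInduction with
  | _ A ih =>
  intro hcl
  rcases A.eq_empty_or_nonempty with rfl | ⟨v, hv⟩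
  · exact ⟨fun _ => 0, by simp, by simp⟩
  set C := univ.filter (fun y => WReach Adj v y) with hC
  have hCA : C ⊆ A := fun w hw => hcl v hv w (mem_filter.mp hw).2
  have hvC : v ∈ C := mem_filter.mpr ⟨mem_univ _, .refl⟩
  set A' := A \ C with hA'
  have hA'cl : ∀ u ∈ A', ∀ w, WReach Adj u w → w ∈ A' := by
    intro u hu w huw
    have huA := (mem_sdiff.mp hu).1
    have huC := (mem_sdiff.mp hu).2
    refine mem_sdiff.mpr ⟨hcl u huA w huw, fun hwC => ?_⟩
    exact huC (mem_filter.mpr ⟨mem_univ _,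
      ((mem_filter.mp hwC).2).trans (wreach_symm Adj huw)⟩)
  have hss : A' ⊂ A := Finset.sdiff_ssubset hCA ⟨v, hvC⟩
  obtain ⟨f', hinj', hsum'⟩ := ih A' hss hA'cl
  set S := A'.image f' with hS
  have hcard : 2 * (S.card + C.card) + 1 ≤ Fintype.card Γ := by
    have h1 : S.card ≤ A'.card := card_image_le
    have h2 : A'.card + C.card = A.card := by
      rw [hA', card_sdiff_of_subset hCA]
      have := card_le_card hCA
      omega
    have h3 : A.card ≤ Fintype.card V := card_le_univ A
    omega
  obtain ⟨T, hTcard, hTS, hTsum⟩ := selection S C.card (hcomp v) hcard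
  have e : {x // x ∈ C} ≃ {x // x ∈ T} := Finset.equivOfCardEq hTcard.symm
  set f : V → Γ := fun w => if hw : w ∈ C then (e ⟨w, hw⟩ : Γ) else f' w with hf
  have hfC : ∀ w (hw : w ∈ C), f w = (e ⟨w, hw⟩ : Γ) := fun w hw => dif_pos hw
  have hfT : ∀ w (hw : w ∈ C), f w ∈ T := fun w hw => by
    rw [hfC w hw]; exact (e ⟨w, hw⟩).2
  have hfA' : ∀ w ∈ A', f w = f' w := fun w hw => dif_neg (mem_sdiff.mp hw).2
  have hfS : ∀ w ∈ A', f w ∈ S := fun w hw => by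
    rw [hfA' w hw]; exact mem_image_of_mem f' hw
  refine ⟨f, ?_, ?_⟩
  · intro w₁ h₁ w₂ h₂ heq
    rw [mem_coe] at h₁ h₂
    by_cases hw₁ : w₁ ∈ C <;> by_cases hw₂ : w₂ ∈ C
    · rw [hfC w₁ hw₁, hfC w₂ hw₂] at heq
      have := e.injective (Subtype.coe_injective heq)
      exact congrArg Subtype.val this
    · exact absurd (hfT w₁ hw₁) (fun hT =>
        (disjoint_left.mp hTS) hT (heq ▸ hfS w₂ (mem_sdiff.mpr ⟨h₂, hw₂⟩)))
    · exact absurd (hfT w₂ hw₂) (fun hT =>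
        (disjoint_left.mp hTS) hT (heq ▸ hfS w₁ (mem_sdiff.mpr ⟨h₁, hw₁⟩)))
    · exact hinj' (mem_coe.mpr (mem_sdiff.mpr ⟨h₁, hw₁⟩))
        (mem_coe.mpr (mem_sdiff.mpr ⟨h₂, hw₂⟩))
        (by rw [← hfA' w₁ (mem_sdiff.mpr ⟨h₁, hw₁⟩), ← hfA' w₂ (mem_sdiff.mpr ⟨h₂, hw₂⟩)]; exact heq)
  · intro u huA
    by_cases hWv : WReach Adj v u
    · have hclass : univ.filter (fun y => WReach Adj u y) = C := by
        ext y
        simp only [hC, mem_filter, mem_univ, true_and]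
        exact ⟨fun h => hWv.trans h, fun h => (wreach_symm Adj hWv).trans h⟩
      rw [hclass, ← hTsum]
      refine Finset.sum_bij (fun y hy => (e ⟨y, hy⟩ : Γ)) ?_ ?_ ?_ ?_
      · intro y hy; exact (e ⟨y, hy⟩).2
      · intro y₁ hy₁ y₂ hy₂ hee
        exact congrArg Subtype.val (e.injective (Subtype.coe_injective hee))
      · intro x hx
        exact ⟨(e.symm ⟨x, hx⟩ : V), (e.symm ⟨x, hx⟩).2, by simp⟩
      · intro y hy; exact hfC y hy
    · have huA' : u ∈ A' := mem_sdiff.mpr ⟨huA,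
        fun hC' => hWv (mem_filter.mp hC').2⟩
      have hsub : ∀ y ∈ univ.filter (fun y => WReach Adj u y), f y = f' y := by
        intro y hy
        exact hfA' y (hA'cl u huA' y (mem_filter.mp hy).2)
      rw [Finset.sum_congr rfl hsub]
      exact hsum' u huA'
end graph

/-- Theorem (Cichacz–Suchan): any digraph of order `n` with all weakly connected components
of order at least 4 has a `Γ`-irregular labeling whenever `|Γ| ≥ 2n + 1`. -/
theorem stmt_5 {V Γ : Type*} [Fintype V] [AddCommGroup Γ] [Fintype Γ]
    (Adj : V → V → Prop) [DecidableRel Adj]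
    (hcomp : ∀ x : V, 4 ≤ {y | WReach Adj x y}.ncard)
    (hΓ : 2 * Fintype.card V + 1 ≤ Fintype.card Γ) :
    ∃ ψ : V → V → Γ, Function.Injective (vertexSum Adj ψ) := by
  classical
  have hcomp' : ∀ x : V, 3 ≤ (univ.filter (fun y => WReach Adj x y)).card := by
    intro x
    have h4 := hcomp x
    have he : {y | WReach Adj x y}.ncard
        = (univ.filter (fun y => WReach Adj x y)).card := by
      rw [← Set.ncard_coe_finset]
      congr 1
      ext y
      simp
    omega
  obtain ⟨f, hinj, hsums⟩ := pick Adj hΓ hcomp' univ (fun v _ w _ => mem_univ w)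
  have hf : f ∈ (Lhom (Γ := Γ) Adj).range :=
    mem_range_of_classSums Adj f (fun x => hsums x (mem_univ x))
  obtain ⟨ψ, hψ⟩ := hf
  refine ⟨ψ, ?_⟩
  have hve : vertexSum Adj ψ = f := hψ
  rw [hve]
  intro a b hab
  exact hinj (by simp) (by simp) hab
end

section
/- Let n be an even positive integer and let m, l be natural numbers such that 3m + 2l = n − 2. Then the set S = Z_n \ {0, n/2} can be partitioned into m pairwise disjoint zero-sum 3-element subsets A_1, …, A_m and l pairwise disjoint zero-sum 2-element subsets B_1, …, B_l. -/
open Finset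

/-- Corollary (Tannenbaum, Zeng): for `n` even and positive with `3m + 2l = n - 2`, the set
`ZMod n \ {0, n/2}` can be partitioned into `m` zero-sum 3-subsets and `l` zero-sum
2-subsets. -/
theorem stmt_9 (n : ℕ) [NeZero n] (hn : Even n) (m l : ℕ)
    (h : 3 * m + 2 * l = n - 2) :
    ∃ (A : Fin m → Finset (ZMod n)) (B : Fin l → Finset (ZMod n)),
      (∀ i, (A i).card = 3 ∧ ∑ x ∈ A i, x = 0) ∧
      (∀ j, (B j).card = 2 ∧ ∑ x ∈ B j, x = 0) ∧
      (∀ i j, i ≠ j → Disjoint (A i) (A j)) ∧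
      (∀ i j, i ≠ j → Disjoint (B i) (B j)) ∧
      (∀ i j, Disjoint (A i) (B j)) ∧
      univ.biUnion A ∪ univ.biUnion B =
        univ \ {0, ((n / 2 : ℕ) : ZMod n)} := by
  have hn0 : n ≠ 0 := NeZero.ne n
  have hn2 : n % 2 = 0 := Nat.even_iff.mp hn
  set q : ℕ := n / 2 with hqdef
  set k : ℕ := m / 2 with hkdef
  have hm2 : m = 2 * k := by omega
  have hn6 : 6 * k + 2 * l + 2 = n := by omega
  have hq3 : q = 3 * k + l + 1 := by omega
  have hqlt : q < n := by omega
  -- injectivity of casting on [0, n)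
  have hinj : ∀ a b : ℕ, a < n → b < n → (a : ZMod n) = (b : ZMod n) → a = b := by
    intro a b ha hb hab
    have := congrArg ZMod.val hab
    rwa [ZMod.val_cast_of_lt ha, ZMod.val_cast_of_lt hb] at this
  -- nat-level families
  set fA : ℕ → Finset ℕ := fun t =>
    if t < k then {t + 1, 3 * k - 1 - 2 * t, n - 3 * k + t}
    else {k + 2 * (t - k) + 2, n - 1 - (t - k), n - k - 1 - (t - k)} with hfA
  set fB : ℕ → Finset ℕ := fun j => {3 * k + 1 + j, n - 3 * k - 1 - j} with hfB
  have hAmem : ∀ t, t < 2 * k → ∀ x ∈ fA t, 1 ≤ x ∧ x < n ∧ x ≠ q := by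
    intro t ht x hx
    simp only [hfA] at hx
    by_cases htk : t < k
    · rw [if_pos htk] at hx
      simp only [Finset.mem_insert, Finset.mem_singleton] at hx
      omega
    · rw [if_neg htk] at hx
      simp only [Finset.mem_insert, Finset.mem_singleton] at hx
      omega
  have hBmem : ∀ j, j < l → ∀ x ∈ fB j, 1 ≤ x ∧ x < n ∧ x ≠ q := by
    intro j hj x hx
    simp only [hfB, Finset.mem_insert, Finset.mem_singleton] at hx
    omega
  have hAdisj : ∀ t₁ t₂, t₁ < 2 * k → t₂ < 2 * k → t₁ ≠ t₂ →
      ∀ x, x ∈ fA t₁ → x ∈ fA t₂ → False := by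
    intro t₁ t₂ h1 h2 hne x hx1 hx2
    simp only [hfA] at hx1 hx2
    by_cases a1 : t₁ < k <;> by_cases a2 : t₂ < k <;>
      simp only [if_pos, if_neg, a1, a2, if_true, if_false,
        Finset.mem_insert, Finset.mem_singleton] at hx1 hx2 <;> omega
  have hBdisj : ∀ j₁ j₂, j₁ < l → j₂ < l → j₁ ≠ j₂ →
      ∀ x, x ∈ fB j₁ → x ∈ fB j₂ → False := by
    intro j₁ j₂ h1 h2 hne x hx1 hx2
    simp only [hfB, Finset.mem_insert, Finset.mem_singleton] at hx1 hx2
    omega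
  have hABdisj : ∀ t j, t < 2 * k → j < l → ∀ x, x ∈ fA t → x ∈ fB j → False := by
    intro t j ht hj x hx1 hx2
    simp only [hfB, Finset.mem_insert, Finset.mem_singleton] at hx2
    simp only [hfA] at hx1
    by_cases a1 : t < k <;>
      simp only [if_pos, if_neg, a1, if_true, if_false,
        Finset.mem_insert, Finset.mem_singleton] at hx1 <;> omega
  have hcov : ∀ x : ℕ, 1 ≤ x → x < n → x ≠ q →
      (∃ t, t < 2 * k ∧ x ∈ fA t) ∨ (∃ j, j < l ∧ x ∈ fB j) := by
    intro x h1 h2 h3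
    by_cases c1 : x ≤ k
    · left; refine ⟨x - 1, by omega, ?_⟩
      simp only [hfA]
      rw [if_pos (show x - 1 < k by omega)]
      simp only [Finset.mem_insert, Finset.mem_singleton]; omega
    by_cases c2 : x ≤ 3 * k
    · by_cases cp : (x + k) % 2 = 0
      · left; refine ⟨k + (x - k - 2) / 2, by omega, ?_⟩
        simp only [hfA]
        rw [if_neg (show ¬ (k + (x - k - 2) / 2 < k) by omega)]
        simp only [Finset.mem_insert, Finset.mem_singleton]; omega
      · left; refine ⟨(3 * k - 1 - x) / 2, by omega, ?_⟩
        simp only [hfA]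
        rw [if_pos (show (3 * k - 1 - x) / 2 < k by omega)]
        simp only [Finset.mem_insert, Finset.mem_singleton]; omega
    by_cases c3 : x < q
    · right
      refine ⟨x - 3 * k - 1, by omega, ?_⟩
      simp only [hfB, Finset.mem_insert, Finset.mem_singleton]; omega
    by_cases c4 : x ≤ n - 3 * k - 1
    · right
      refine ⟨n - 3 * k - 1 - x, by omega, ?_⟩
      simp only [hfB, Finset.mem_insert, Finset.mem_singleton]; omega
    by_cases c5 : x ≤ n - 2 * k - 1
    · left; refine ⟨x - (n - 3 * k), by omega, ?_⟩
      simp only [hfA]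
      rw [if_pos (show x - (n - 3 * k) < k by omega)]
      simp only [Finset.mem_insert, Finset.mem_singleton]; omega
    by_cases c6 : x ≤ n - k - 1
    · left; refine ⟨k + (n - k - 1 - x), by omega, ?_⟩
      simp only [hfA]
      rw [if_neg (show ¬ (k + (n - k - 1 - x) < k) by omega)]
      simp only [Finset.mem_insert, Finset.mem_singleton]; omega
    · left; refine ⟨k + (n - 1 - x), by omega, ?_⟩
      simp only [hfA]
      rw [if_neg (show ¬ (k + (n - 1 - x) < k) by omega)]
      simp only [Finset.mem_insert, Finset.mem_singleton]; omega
  -- ZMod-level helpers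
  have key3 : ∀ a b c : ℕ, a < n → b < n → c < n → a ≠ b → a ≠ c → b ≠ c →
      (a + b + c = n ∨ a + b + c = 2 * n) →
      (({a, b, c} : Finset ℕ).image (fun x : ℕ => (x : ZMod n))).card = 3 ∧
      ∑ x ∈ ({a, b, c} : Finset ℕ).image (fun x : ℕ => (x : ZMod n)), x = 0 := by
    intro a b c ha hb hc hab hac hbc hsum
    have hmem : ∀ x ∈ ({a, b, c} : Finset ℕ), x < n := by
      intro x hx
      simp only [Finset.mem_insert, Finset.mem_singleton] at hx
      rcases hx with rfl | rfl | rfl <;> assumption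
    have hinj' : ∀ x ∈ ({a, b, c} : Finset ℕ), ∀ y ∈ ({a, b, c} : Finset ℕ),
        (x : ZMod n) = (y : ZMod n) → x = y :=
      fun x hx y hy hxy => hinj x y (hmem x hx) (hmem y hy) hxy
    have hanotin : a ∉ ({b, c} : Finset ℕ) := by
      simp only [Finset.mem_insert, Finset.mem_singleton]; tauto
    constructor
    · rw [Finset.card_image_of_injOn
        (fun x hx y hy hxy => hinj' x (Finset.mem_coe.mp hx) y (Finset.mem_coe.mp hy) hxy)]
      rw [show ({a, b, c} : Finset ℕ) = insert a ({b, c} : Finset ℕ) from rfl,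
        Finset.card_insert_of_notMem hanotin, Finset.card_pair hbc]
    · rw [Finset.sum_image hinj']
      rw [show ({a, b, c} : Finset ℕ) = insert a ({b, c} : Finset ℕ) from rfl,
        Finset.sum_insert hanotin, Finset.sum_pair hbc]
      have h2 : ((a : ZMod n) + ((b : ZMod n) + (c : ZMod n))) = ((a + b + c : ℕ) : ZMod n) := by
        push_cast; ring
      rw [h2]
      rcases hsum with hs | hs <;> rw [hs]
      · exact ZMod.natCast_self n
      · push_cast
        simp [ZMod.natCast_self]
  have key2 : ∀ a b : ℕ, a < n → b < n → a ≠ b → (a + b = n) →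
      (({a, b} : Finset ℕ).image (fun x : ℕ => (x : ZMod n))).card = 2 ∧
      ∑ x ∈ ({a, b} : Finset ℕ).image (fun x : ℕ => (x : ZMod n)), x = 0 := by
    intro a b ha hb hab hsum
    have hmem : ∀ x ∈ ({a, b} : Finset ℕ), x < n := by
      intro x hx
      simp only [Finset.mem_insert, Finset.mem_singleton] at hx
      rcases hx with rfl | rfl <;> assumption
    have hinj' : ∀ x ∈ ({a, b} : Finset ℕ), ∀ y ∈ ({a, b} : Finset ℕ),
        (x : ZMod n) = (y : ZMod n) → x = y :=
      fun x hx y hy hxy => hinj x y (hmem x hx) (hmem y hy) hxy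
    constructor
    · rw [Finset.card_image_of_injOn
        (fun x hx y hy hxy => hinj' x (Finset.mem_coe.mp hx) y (Finset.mem_coe.mp hy) hxy)]
      exact Finset.card_pair hab
    · rw [Finset.sum_image hinj', Finset.sum_pair hab]
      have h2 : ((a : ZMod n) + (b : ZMod n)) = ((a + b : ℕ) : ZMod n) := by push_cast; ring
      rw [h2, hsum]
      exact ZMod.natCast_self n
  have hdisjZ : ∀ s t : Finset ℕ, (∀ x ∈ s, x < n) → (∀ x ∈ t, x < n) →
      (∀ x, x ∈ s → x ∈ t → False) →
      Disjoint (s.image (fun x : ℕ => (x : ZMod n))) (t.image (fun x : ℕ => (x : ZMod n))) := by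
    intro s t hs ht hst
    rw [Finset.disjoint_left]
    rintro z hz1 hz2
    simp only [Finset.mem_image] at hz1 hz2
    obtain ⟨x, hx, rfl⟩ := hz1
    obtain ⟨y, hy, hxy⟩ := hz2
    exact hst x hx (by rwa [hinj y x (ht y hy) (hs x hx) hxy] at hy)
  refine ⟨fun i => (fA i.1).image (fun x : ℕ => (x : ZMod n)),
    fun j => (fB j.1).image (fun x : ℕ => (x : ZMod n)), ?_, ?_, ?_, ?_, ?_, ?_⟩
  · intro i
    have hi : (i : ℕ) < 2 * k := by have := i.isLt; omega
    by_cases hik : (i : ℕ) < k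
    · simp only [hfA]
      rw [if_pos hik]
      exact key3 _ _ _ (by omega) (by omega) (by omega) (by omega) (by omega) (by omega)
        (Or.inl (by omega))
    · simp only [hfA]
      rw [if_neg hik]
      exact key3 _ _ _ (by omega) (by omega) (by omega) (by omega) (by omega) (by omega)
        (Or.inr (by omega))
  · intro j
    have hj : (j : ℕ) < l := j.isLt
    simp only [hfB]
    exact key2 _ _ (by omega) (by omega) (by omega) (by omega)
  · intro i j hij
    have hi : (i : ℕ) < 2 * k := by have := i.isLt; omega
    have hj : (j : ℕ) < 2 * k := by have := j.isLt; omega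
    exact hdisjZ _ _ (fun x hx => (hAmem _ hi x hx).2.1) (fun x hx => (hAmem _ hj x hx).2.1)
      (hAdisj _ _ hi hj (fun e => hij (Fin.ext e)))
  · intro i j hij
    exact hdisjZ _ _ (fun x hx => (hBmem _ i.isLt x hx).2.1)
      (fun x hx => (hBmem _ j.isLt x hx).2.1)
      (hBdisj _ _ i.isLt j.isLt (fun e => hij (Fin.ext e)))
  · intro i j
    have hi : (i : ℕ) < 2 * k := by have := i.isLt; omega
    exact hdisjZ _ _ (fun x hx => (hAmem _ hi x hx).2.1) (fun x hx => (hBmem _ j.isLt x hx).2.1)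
      (hABdisj _ _ hi j.isLt)
  · ext z
    simp only [Finset.mem_union, Finset.mem_biUnion, Finset.mem_univ, true_and,
      Finset.mem_sdiff, Finset.mem_insert, Finset.mem_singleton, Finset.mem_image]
    constructor
    · rintro (⟨i, x, hx, rfl⟩ | ⟨j, x, hx, rfl⟩)
      · have hi : (i : ℕ) < 2 * k := by have := i.isLt; omega
        obtain ⟨hx1, hx2, hx3⟩ := hAmem _ hi x hx
        rintro (h0 | hq0)
        · exact absurd (hinj x 0 hx2 (by omega) (by simpa using h0)) (by omega)
        · exact hx3 (hinj x q hx2 hqlt hq0)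
      · obtain ⟨hx1, hx2, hx3⟩ := hBmem _ j.isLt x hx
        rintro (h0 | hq0)
        · exact absurd (hinj x 0 hx2 (by omega) (by simpa using h0)) (by omega)
        · exact hx3 (hinj x q hx2 hqlt hq0)
    · intro hz
      push_neg at hz
      obtain ⟨hz1, hz2⟩ := hz
      have hv : ((z.val : ℕ) : ZMod n) = z := by
        simp [ZMod.natCast_val, ZMod.cast_id]
      have hv2 : z.val < n := ZMod.val_lt z
      have hv1 : 1 ≤ z.val := by
        rcases Nat.eq_zero_or_pos z.val with h0 | h0
        · exact absurd (by rw [← hv, h0]; simp) hz1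
        · exact h0
      have hv3 : z.val ≠ q := fun e => hz2 (by rw [← hv, e])
      rcases hcov z.val hv1 hv2 hv3 with ⟨t, ht, hmem⟩ | ⟨j, hj, hmem⟩
      · exact Or.inl ⟨⟨t, by omega⟩, z.val, hmem, hv⟩
      · exact Or.inr ⟨⟨j, hj⟩, z.val, hmem, hv⟩
end
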